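/- Let G be a finite simple graph with maximum degree at most 3 and let S be a nonempty subset of V(G) such that there are exactly k edges of G with one endpoint in S and the other in V(G) ∖ S, and every vertex in N_G(S) ∖ S has degree 2 or 3 in G. If at most ℓ of these k edges are incident with a vertex of N_G(S) ∖ S of degree 2 (where 0 ≤ ℓ ≤ k), then c_G(S) ≤ 4k + max{ ⌊ℓ/2⌋ + ⌊(k−ℓ)/3⌋, ⌊(ℓ−1)/2⌋ + ⌊(k−ℓ+1)/3⌋ }, where the floors are of integer (possibly negative) arguments. -/

import Mathlib

open Finset

/-- The domination number: minimum size of a dominating set. -/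
noncomputable def gamma {V : Type*} [Fintype V] (G : SimpleGraph V) : ℕ :=
  sInf {n | ∃ D : Finset V, D.card = n ∧ ∀ v : V, v ∈ D ∨ ∃ u ∈ D, G.Adj u v}

/-- The degree of a vertex. -/
noncomputable def gdeg {V : Type*} (G : SimpleGraph V) (v : V) : ℕ :=
  Nat.card (G.neighborSet v)

/-- Weight of a vertex of degree `d` (for graphs of maximum degree at most 3). -/
def wt (d : ℕ) : ℕ :=
  if d = 0 then 20 else if d = 1 then 15 else if d = 2 then 11 else 7

/-- Total weight of a graph: `w(G) = Σ_v w_G(v)`. -/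
noncomputable def wsum {V : Type*} [Fintype V] (G : SimpleGraph V) : ℕ :=
  ∑ v : V, wt (gdeg G v)

/-- The cost `c_G(S) = w_{G-S}(V∖S) - w_G(V∖S)`. -/
noncomputable def cost {V : Type*} [Fintype V] [DecidableEq V]
    (G : SimpleGraph V) (S : Finset V) : ℤ :=
  (wsum (G.induce (↑(Sᶜ) : Set V)) : ℤ) - ∑ v ∈ Sᶜ, (wt (gdeg G v) : ℤ)

section Aux

variable {V : Type*} [Fintype V] [DecidableEq V] (G : SimpleGraph V) [DecidableRel G.Adj]

lemma aux_gdeg (v : V) : gdeg G v = (univ.filter (fun u => G.Adj v u)).card := by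
  rw [gdeg, Nat.card_eq_fintype_card, G.card_neighborSet_eq_degree,
    SimpleGraph.degree, SimpleGraph.neighborFinset_eq_filter]

lemma aux_subtype_card {α : Type*} [Fintype α] (p : α → Prop) [DecidablePred p] :
    Nat.card {e : α // p e} = (univ.filter p).card := by
  rw [Nat.card_eq_fintype_card, Fintype.card_subtype]

lemma aux_induce_deg (s : Set V) [DecidablePred (· ∈ s)] (x : s) :
    gdeg (G.induce s) x = (univ.filter (fun u => u ∈ s ∧ G.Adj ↑x u)).card := by
  rw [gdeg]
  have e : ((G.induce s).neighborSet x) ≃ {u : V // u ∈ s ∧ G.Adj ↑x u} :=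
    Equiv.trans (Equiv.refl _) (Equiv.subtypeSubtypeEquivSubtypeInter (· ∈ s) (G.Adj ↑x))
  rw [Nat.card_congr e, Nat.card_eq_fintype_card, Fintype.card_subtype]

lemma aux_bij (S : Finset V) (Q : V → Prop) [DecidablePred Q] :
    ((Sᶜ ×ˢ S).filter (fun p => G.Adj p.2 p.1 ∧ Q p.1)).card =
    (univ.filter (fun e : Sym2 V => e ∈ G.edgeSet ∧
      ∃ a b, a ∈ S ∧ b ∉ S ∧ Q b ∧ e = s(a, b))).card := by
  apply Finset.card_bij (fun p _ => s(p.2, p.1))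
  · rintro ⟨b, a⟩ hp
    simp only [mem_filter, mem_product, mem_compl] at hp
    simp only [mem_filter, mem_univ, true_and, SimpleGraph.mem_edgeSet]
    exact ⟨hp.2.1, a, b, hp.1.2, hp.1.1, hp.2.2, rfl⟩
  · rintro ⟨b, a⟩ hp ⟨b', a'⟩ hp' h
    simp only [mem_filter, mem_product, mem_compl] at hp hp'
    rw [Sym2.eq_iff] at h
    rcases h with ⟨rfl, rfl⟩ | ⟨rfl, rfl⟩
    · rfl
    · exact absurd hp.1.2 hp'.1.1
  · rintro e he
    simp only [mem_filter, mem_univ, true_and] at he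
    obtain ⟨he1, a, b, haS, hbS, hQ, rfl⟩ := he
    refine ⟨(b, a), ?_, rfl⟩
    simp only [mem_filter, mem_product, mem_compl]
    exact ⟨⟨hbS, haS⟩, (SimpleGraph.mem_edgeSet G).mp he1, hQ⟩

lemma aux_sum (S : Finset V) (Q : V → Prop) [DecidablePred Q] :
    ∑ v ∈ Sᶜ.filter Q, (S.filter fun u => G.Adj u v).card
      = ((Sᶜ ×ˢ S).filter (fun p => G.Adj p.2 p.1 ∧ Q p.1)).card := by
  rw [Finset.card_eq_sum_card_fiberwise (f := Prod.fst) (t := Sᶜ.filter Q)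
    (by rintro ⟨b, a⟩ hp; simp only [mem_coe, mem_filter, mem_product] at hp ⊢; exact ⟨hp.1.1, hp.2.2⟩)]
  refine Finset.sum_congr rfl fun v hv => ?_
  simp only [mem_filter, mem_compl] at hv
  apply Finset.card_bij (fun u _ => (v, u))
  · intro u hu
    simp only [mem_filter] at hu ⊢
    simp only [mem_product, mem_compl]
    exact ⟨⟨⟨hv.1, hu.1⟩, hu.2, hv.2⟩, trivial⟩
  · intro u _ u' _ h
    exact (Prod.mk.injEq _ _ _ _ ▸ h).2
  · rintro ⟨b, a⟩ hp
    simp only [mem_filter, mem_product] at hp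
    obtain ⟨⟨⟨_, haS⟩, hadj, _⟩, rfl⟩ := hp
    exact ⟨a, by simp [mem_filter, haS, hadj], rfl⟩

lemma aux_pt (d j : ℕ) (hd : d ≤ 3) (hj : j ≤ d) (h2 : j ≠ 0 → d = 2 ∨ d = 3) :
    (wt (d - j) : ℤ) - wt d ≤ 4 * j + (if d = 2 ∧ j = 2 then 1 else 0)
      + (if d = 3 ∧ j = 3 then 1 else 0) := by
  interval_cases d <;> interval_cases j <;> simp_all [wt] <;> omega

lemma aux_arith (a b m l k : ℤ) (hml : m ≤ l) (ha : 2 * a ≤ m) (hb : 3 * b ≤ k - m) :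
    a + b ≤ max (Int.fdiv l 2 + Int.fdiv (k - l) 3)
          (Int.fdiv (l - 1) 2 + Int.fdiv (k - l + 1) 3) := by
  rw [Int.fdiv_eq_ediv_of_nonneg _ (by norm_num), Int.fdiv_eq_ediv_of_nonneg _ (by norm_num),
    Int.fdiv_eq_ediv_of_nonneg _ (by norm_num), Int.fdiv_eq_ediv_of_nonneg _ (by norm_num), le_max_iff]
  omega

end Aux

theorem cost_bound_precise {V : Type*} [Fintype V] [DecidableEq V] (G : SimpleGraph V)
    (hdeg : ∀ v : V, gdeg G v ≤ 3)
    (S : Finset V) (hS : S.Nonempty) (k ℓ : ℕ) (hℓk : ℓ ≤ k)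
    (hk : Nat.card {e : Sym2 V // e ∈ G.edgeSet ∧ ∃ a b, a ∈ S ∧ b ∉ S ∧ e = s(a, b)} = k)
    (hN : ∀ v : V, v ∉ S → (∃ u ∈ S, G.Adj u v) → gdeg G v = 2 ∨ gdeg G v = 3)
    (hℓ : Nat.card {e : Sym2 V // e ∈ G.edgeSet ∧
        ∃ a b, a ∈ S ∧ b ∉ S ∧ gdeg G b = 2 ∧ e = s(a, b)} ≤ ℓ) :
    cost G S ≤ 4 * (k : ℤ) +
      max (Int.fdiv (ℓ : ℤ) 2 + Int.fdiv ((k : ℤ) - ℓ) 3)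
          (Int.fdiv ((ℓ : ℤ) - 1) 2 + Int.fdiv ((k : ℤ) - ℓ + 1) 3) := by
  classical
  set J : V → ℕ := fun v => (S.filter fun u => G.Adj u v).card with hJdef
  -- split of degree
  have hsplit : ∀ v : V, J v ≤ gdeg G v ∧
      (univ.filter fun u => u ∉ S ∧ G.Adj v u).card = gdeg G v - J v := by
    intro v
    have h1 : gdeg G v = (univ.filter fun u => G.Adj v u).card := aux_gdeg G v
    have h2 : J v = (univ.filter fun u => u ∈ S ∧ G.Adj v u).card := by
      have hset : (S.filter fun u => G.Adj u v) = (univ.filter fun u => u ∈ S ∧ G.Adj v u) := by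
        ext u; simp [G.adj_comm]
      show (S.filter fun u => G.Adj u v).card = _
      rw [hset]
    have h3 : (univ.filter fun u => u ∈ S ∧ G.Adj v u).card
        + (univ.filter fun u => u ∉ S ∧ G.Adj v u).card
        = (univ.filter fun u => G.Adj v u).card := by
      rw [← Finset.card_filter_add_card_filter_not
        (s := univ.filter fun u => G.Adj v u) (p := fun u => u ∈ S)]
      congr 1 <;> · congr 1; ext u; simp [and_comm]
    omega
  -- cost formula
  have hcost : cost G S = ∑ v ∈ Sᶜ, ((wt (gdeg G v - J v) : ℤ) - wt (gdeg G v)) := by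
    rw [cost]
    have hws : wsum (G.induce (↑(Sᶜ) : Set V)) = ∑ v ∈ Sᶜ, wt (gdeg G v - J v) := by
      rw [wsum, ← Finset.sum_finset_coe (s := Sᶜ) (f := fun v => wt (gdeg G v - J v))]
      refine Finset.sum_congr rfl fun x _ => ?_
      congr 1
      rw [aux_induce_deg G _ x, ← (hsplit ↑x).2]
      have : (univ.filter fun u => u ∈ (↑(Sᶜ) : Set V) ∧ G.Adj ↑x u)
          = (univ.filter fun u => u ∉ S ∧ G.Adj ↑x u) := by
        ext u; simp
      rw [this]
    rw [hws, Finset.sum_sub_distrib, Nat.cast_sum]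
  rw [hcost]
  -- pointwise bound
  have hpt : ∀ v ∈ Sᶜ, (wt (gdeg G v - J v) : ℤ) - wt (gdeg G v) ≤
      4 * J v + (if gdeg G v = 2 ∧ J v = 2 then 1 else 0)
      + (if gdeg G v = 3 ∧ J v = 3 then 1 else 0) := by
    intro v hv
    refine aux_pt _ _ (hdeg v) (hsplit v).1 fun hne => ?_
    rw [mem_compl] at hv
    refine hN v hv ?_
    obtain ⟨u, hu⟩ := Finset.card_ne_zero.mp hne
    rw [mem_filter] at hu
    exact ⟨u, hu.1, hu.2⟩
  have hle := Finset.sum_le_sum hpt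
  refine hle.trans ?_
  -- counting
  have hkcount : ∑ v ∈ Sᶜ, J v = k := by
    have h1 := aux_sum G S (fun _ => True)
    rw [Finset.filter_true] at h1
    rw [hJdef]
    simp only []
    rw [h1, aux_bij G S (fun _ => True), ← hk, aux_subtype_card]
    congr 1
    ext e
    simp only [mem_filter, mem_univ, true_and]
  set m : ℕ := ∑ v ∈ Sᶜ.filter (fun v => gdeg G v = 2), J v with hmdef
  set n : ℕ := ∑ v ∈ Sᶜ.filter (fun v => gdeg G v = 3), J v with hndef
  have hmℓ : m ≤ ℓ := by
    have h1 := aux_sum G S (fun v => gdeg G v = 2)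
    rw [hmdef, hJdef]
    simp only []
    rw [h1, aux_bij G S (fun v => gdeg G v = 2), ← aux_subtype_card]
    exact hℓ
  have hmn : m + n ≤ k := by
    rw [← hkcount]
    rw [← Finset.sum_filter_add_sum_filter_not Sᶜ (fun v => gdeg G v = 2) J]
    refine Nat.add_le_add le_rfl (Finset.sum_le_sum_of_subset ?_)
    intro v hv
    simp only [mem_filter] at hv ⊢
    exact ⟨hv.1, by omega⟩
  set a : ℕ := (Sᶜ.filter (fun v => gdeg G v = 2 ∧ J v = 2)).card with hadef
  set b : ℕ := (Sᶜ.filter (fun v => gdeg G v = 3 ∧ J v = 3)).card with hbdef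
  have h2a : 2 * a ≤ m := by
    have : ∑ v ∈ Sᶜ.filter (fun v => gdeg G v = 2 ∧ J v = 2), J v = 2 * a := by
      rw [Finset.sum_congr rfl (fun v hv => (Finset.mem_filter.mp hv).2.2)]
      simp [hadef, mul_comm]
    rw [← this, hmdef]
    refine Finset.sum_le_sum_of_subset ?_
    intro v hv
    simp only [mem_filter] at hv ⊢
    exact ⟨hv.1, hv.2.1⟩
  have h3b : 3 * b ≤ n := by
    have : ∑ v ∈ Sᶜ.filter (fun v => gdeg G v = 3 ∧ J v = 3), J v = 3 * b := by
      rw [Finset.sum_congr rfl (fun v hv => (Finset.mem_filter.mp hv).2.2)]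
      simp [hbdef, mul_comm]
    rw [← this, hndef]
    refine Finset.sum_le_sum_of_subset ?_
    intro v hv
    simp only [mem_filter] at hv ⊢
    exact ⟨hv.1, hv.2.1⟩
  -- evaluate the RHS sum
  have hsum : ∑ v ∈ Sᶜ, ((4 : ℤ) * J v + (if gdeg G v = 2 ∧ J v = 2 then 1 else 0)
      + (if gdeg G v = 3 ∧ J v = 3 then 1 else 0)) = 4 * k + a + b := by
    rw [Finset.sum_add_distrib, Finset.sum_add_distrib, ← Finset.mul_sum,
      Finset.sum_boole, Finset.sum_boole, ← Nat.cast_sum, hkcount, hadef, hbdef]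
  rw [hsum]
  have harr := aux_arith (a : ℤ) b m ℓ k (by exact_mod_cast hmℓ) (by exact_mod_cast h2a)
    (by push_cast; omega)
  linarith
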